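/- Let n ≥ 1, let P be a graded poset of rank n+1, and let ℳ be the set of maximal chains of P (each maximal chain consists of one element of each rank 0, 1, …, n+1). Then there exists a map assigning to each maximal chain C ∈ ℳ an interval system ℐ_C on {1,…,n} such that for every subset S ⊆ {1,…,n}, the number of maximal chains C ∈ ℳ for which S is a blocker of ℐ_C equals f_S(P). -/

import Mathlib

/-- A graded poset: a finite poset with a least element `bot`, a greatest element `top`,
and a rank function that is `0` at `bot` and increases by one along covering relations. -/
structure GradedPoset where
  carrier : Type
  [fintypeCarrier : Fintype carrier]
  [partialOrderCarrier : PartialOrder carrier]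
  bot : carrier
  top : carrier
  bot_le : ∀ x : carrier, bot ≤ x
  le_top : ∀ x : carrier, x ≤ top
  rank : carrier → ℕ
  rank_bot : rank bot = 0
  rank_covBy : ∀ x y : carrier, x ⋖ y → rank y = rank x + 1

attribute [instance] GradedPoset.fintypeCarrier GradedPoset.partialOrderCarrier

namespace Stmt2Aux
variable {P : GradedPoset}
lemma exists_covby_le {x y : P.carrier} (h : x < y) : ∃ z, x ⋖ z ∧ z ≤ y := by
  classical
  have hfin : ({z : P.carrier | x < z ∧ z ≤ y}).Finite := Set.toFinite _
  have hne : {z : P.carrier | x < z ∧ z ≤ y}.Nonempty := ⟨y, h, le_rfl⟩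
  obtain ⟨z, ⟨hxz, hzy⟩, hmin⟩ := Set.Finite.exists_minimal hfin hne
  refine ⟨z, ⟨hxz, fun w hxw hwz => ?_⟩, hzy⟩
  have := le_antisymm (hmin ⟨hxw, hwz.le.trans hzy⟩ (le_of_lt hwz)) hwz.le
  exact absurd this hwz.ne'

lemma rank_strictMono : StrictMono P.rank := by
  intro x y h
  have wf : WellFounded ((· > ·) : P.carrier → P.carrier → Prop) :=
    (Finite.to_wellFoundedGT).wf
  induction x using wf.induction with
  | _ x IH =>
    obtain ⟨z, hxz, hzy⟩ := exists_covby_le h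
    have hr : P.rank z = P.rank x + 1 := P.rank_covBy _ _ hxz
    rcases eq_or_lt_of_le hzy with rfl | hlt
    · omega
    · have := IH z hxz.lt hlt
      omega

lemma rank_le_of_le {x y : P.carrier} (h : x ≤ y) : P.rank x ≤ P.rank y := by
  rcases eq_or_lt_of_le h with rfl | h
  · exact le_rfl
  · exact (rank_strictMono h).le

lemma covBy_of_rank {x y : P.carrier} (h : x < y) (hr : P.rank y = P.rank x + 1) : x ⋖ y := by
  refine ⟨h, fun w hxw hwy => ?_⟩
  have h1 := rank_strictMono hxw
  have h2 := rank_strictMono hwy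
  omega

lemma eq_bot_of_rank (x : P.carrier) (hx : P.rank x = 0) : x = P.bot := by
  rcases eq_or_lt_of_le (P.bot_le x) with h | h
  · exact h.symm
  · have := rank_strictMono h
    rw [P.rank_bot] at this
    omega

lemma eq_top_of_rank {n : ℕ} (hP : P.rank P.top = n + 1) (x : P.carrier)
    (hx : P.rank x = n + 1) : x = P.top := by
  rcases eq_or_lt_of_le (P.le_top x) with h | h
  · exact h
  · have := rank_strictMono h
    omega

lemma rank_le_top {n : ℕ} (hP : P.rank P.top = n + 1) (x : P.carrier) :
    P.rank x ≤ n + 1 := by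
  have := rank_le_of_le (P.le_top x)
  omega

/-- rank is injective on chains -/
lemma chain_rank_inj {c : Finset P.carrier} (hc : IsChain (· ≤ ·) (↑c : Set P.carrier))
    {x y : P.carrier} (hx : x ∈ c) (hy : y ∈ c) (h : P.rank x = P.rank y) : x = y := by
  rcases eq_or_ne x y with rfl | hne
  · rfl
  · rcases hc hx hy hne with hle | hle
    · have := rank_strictMono (lt_of_le_of_ne hle hne)
      omega
    · have := rank_strictMono (lt_of_le_of_ne hle (Ne.symm hne))
      omega



/-- an injective encoding of the carrier into ℕ -/
noncomputable def eN (P : GradedPoset) (y : P.carrier) : ℕ := (Fintype.equivFin P.carrier y : ℕ)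

lemma eN_lt (y : P.carrier) : eN P y < Fintype.card P.carrier := (Fintype.equivFin P.carrier y).isLt

lemma eN_inj {y y' : P.carrier} (h : eN P y = eN P y') : y = y' := by
  have := Fin.val_injective h
  exact (Fintype.equivFin P.carrier).injective this

/-- A (clamped) saturated chain from `x` to `z`, as a function of ranks. -/
def SatC (P : GradedPoset) (x z : P.carrier) (g : ℕ → P.carrier) : Prop :=
  (∀ i, i ≤ P.rank x → g i = x) ∧ (∀ i, P.rank z ≤ i → g i = z) ∧
  (∀ i, P.rank x ≤ i → i < P.rank z → g i ⋖ g (i+1))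

lemma satc_const (x : P.carrier) : SatC P x x (fun _ => x) :=
  ⟨fun _ _ => rfl, fun _ _ => rfl, fun i h1 h2 => by omega⟩

lemma satc_rank_eq {x z : P.carrier} {g} (hg : SatC P x z g) :
    ∀ i, P.rank x ≤ i → i ≤ P.rank z → P.rank (g i) = i := by
  have key : ∀ j, P.rank x + j ≤ P.rank z → P.rank (g (P.rank x + j)) = P.rank x + j := by
    intro j
    induction j with
    | zero => intro _; simp only [Nat.add_zero]; rw [hg.1 _ le_rfl]
    | succ j IH =>
      intro hj
      have h1 : P.rank x ≤ P.rank x + j := by omega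
      have h2 : P.rank x + j < P.rank z := by omega
      have hcov := hg.2.2 _ h1 h2
      have := P.rank_covBy _ _ hcov
      rw [show P.rank x + (j+1) = (P.rank x + j) + 1 by omega, this, IH (by omega)]
  intro i h1 h2
  have := key (i - P.rank x) (by omega)
  rwa [show P.rank x + (i - P.rank x) = i by omega] at this

lemma satc_mono {x z : P.carrier} {g} (hxz : x ≤ z) (hg : SatC P x z g) : Monotone g := by
  have hr : P.rank x ≤ P.rank z := by
    rcases eq_or_lt_of_le hxz with rfl | h
    · exact le_rfl
    · exact (rank_strictMono h).le
  apply monotone_nat_of_le_succ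
  intro i
  rcases lt_or_ge i (P.rank x) with h | h
  · rw [hg.1 i (by omega), hg.1 (i+1) (by omega)]
  · rcases lt_or_ge i (P.rank z) with h2 | h2
    · exact (hg.2.2 i h h2).le
    · rw [hg.2.1 i (by omega), hg.2.1 (i+1) (by omega)]

lemma satc_exists {x z : P.carrier} (hxz : x ≤ z) : ∃ g, SatC P x z g := by
  rcases eq_or_lt_of_le hxz with rfl | hlt
  · exact ⟨_, satc_const x⟩
  · have H : ∀ k, ∀ x : P.carrier, x < z → P.rank z - P.rank x = k → ∃ g, SatC P x z g := by
      intro k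
      induction k using Nat.strong_induction_on with
      | _ k IH =>
        intro x hxz hk
        have hrxz := rank_strictMono hxz
        obtain ⟨w, hxw, hwz⟩ := exists_covby_le hxz
        have hrw : P.rank w = P.rank x + 1 := P.rank_covBy _ _ hxw
        rcases eq_or_lt_of_le hwz with rfl | hlt2
        · refine ⟨fun i => if i ≤ P.rank x then x else w, ?_, ?_, ?_⟩
          · intro i hi
            show (if i ≤ P.rank x then x else w) = x
            simp [hi]
          · intro i hi
            show (if i ≤ P.rank x then x else w) = w
            rw [if_neg (by omega)]
          · intro i h1 h2
            have hi : i = P.rank x := by omega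
            subst hi
            show (if P.rank x ≤ P.rank x then x else w) ⋖ (if P.rank x + 1 ≤ P.rank x then x else w)
            rw [if_pos le_rfl, if_neg (by omega)]
            exact hxw
        · have hrwz := rank_strictMono hlt2
          obtain ⟨g, hg⟩ := IH (P.rank z - P.rank w) (by omega) w hlt2 rfl
          refine ⟨fun i => if i ≤ P.rank x then x else g i, ?_, ?_, ?_⟩
          · intro i hi
            show (if i ≤ P.rank x then x else g i) = x
            simp [hi]
          · intro i hi
            show (if i ≤ P.rank x then x else g i) = z
            rw [if_neg (by omega), hg.2.1 i hi]
          · intro i h1 h2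
            show (if i ≤ P.rank x then x else g i) ⋖ (if i + 1 ≤ P.rank x then x else g (i+1))
            rcases eq_or_lt_of_le h1 with rfl | h1'
            · have hgw : g (P.rank x + 1) = w := hg.1 _ (by omega)
              rw [if_pos le_rfl, if_neg (by omega), hgw]
              exact hxw
            · rw [if_neg (by omega), if_neg (by omega)]
              exact hg.2.2 i (by omega) h2
    exact H _ x hlt rfl

/-- the weight (base-`card` encoding) of a rank function, up to rank n+1 -/
noncomputable def mW (P : GradedPoset) (n : ℕ) (g : ℕ → P.carrier) : ℕ :=
  ∑ i ∈ Finset.range (n+2), eN P (g i) * (Fintype.card P.carrier)^i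

/-- the minimal weight of a saturated chain from x to z -/
noncomputable def muW (P : GradedPoset) (n : ℕ) (x z : P.carrier) : ℕ :=
  sInf {k | ∃ g, SatC P x z g ∧ mW P n g = k}

lemma muW_exists {n : ℕ} {x z : P.carrier} (hxz : x ≤ z) :
    ∃ g, SatC P x z g ∧ mW P n g = muW P n x z := by
  obtain ⟨g, hg⟩ := satc_exists hxz
  have hne : {k | ∃ g, SatC P x z g ∧ mW P n g = k}.Nonempty := ⟨mW P n g, g, hg, rfl⟩
  exact Nat.sInf_mem hne

lemma muW_le {n : ℕ} {x z : P.carrier} {g} (hg : SatC P x z g) : muW P n x z ≤ mW P n g :=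
  Nat.sInf_le ⟨g, hg, rfl⟩

/-- base-B digit uniqueness -/
lemma digits_unique {B N : ℕ} {a b : ℕ → ℕ} (ha : ∀ i < N, a i < B) (hb : ∀ i < N, b i < B)
    (h : ∑ i ∈ Finset.range N, a i * B^i = ∑ i ∈ Finset.range N, b i * B^i) :
    ∀ i < N, a i = b i := by
  induction N generalizing a b with
  | zero => omega
  | succ N IH =>
    have expand : ∀ c : ℕ → ℕ, ∑ i ∈ Finset.range (N+1), c i * B^i
        = (∑ i ∈ Finset.range N, c (i+1) * B^i) * B + c 0 := by
      intro c
      rw [Finset.sum_range_succ' (fun i => c i * B^i), Finset.sum_mul, pow_zero, mul_one]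
      congr 1
      refine Finset.sum_congr rfl fun i _ => ?_
      rw [pow_succ]
      ring
    rw [expand a, expand b] at h
    have ha0 : a 0 < B := ha 0 (by omega)
    have hb0 : b 0 < B := hb 0 (by omega)
    have hab0 : a 0 = b 0 := by
      have h1 : ((∑ i ∈ Finset.range N, a (i+1) * B^i) * B + a 0) % B = a 0 := by
        rw [mul_comm, Nat.mul_add_mod, Nat.mod_eq_of_lt ha0]
      have h2 : ((∑ i ∈ Finset.range N, b (i+1) * B^i) * B + b 0) % B = b 0 := by
        rw [mul_comm, Nat.mul_add_mod, Nat.mod_eq_of_lt hb0]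
      rw [← h1, h, h2]
    have hB : 0 < B := by omega
    have hsum : ∑ i ∈ Finset.range N, a (i+1) * B^i = ∑ i ∈ Finset.range N, b (i+1) * B^i := by
      rw [hab0] at h
      have := Nat.add_right_cancel h
      exact Nat.eq_of_mul_eq_mul_right hB this
    have := IH (fun i hi => ha (i+1) (by omega)) (fun i hi => hb (i+1) (by omega)) hsum
    intro i hi
    cases i with
    | zero => exact hab0
    | succ i => exact this i (by omega)

lemma satc_unique {n : ℕ} {x z : P.carrier} {g g'} (hz : P.rank z ≤ n + 1)
    (hg : SatC P x z g) (hg' : SatC P x z g') (h : mW P n g = mW P n g') : g = g' := by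
  have key := digits_unique (B := Fintype.card P.carrier) (N := n+2)
    (a := fun i => eN P (g i)) (b := fun i => eN P (g' i))
    (fun i _ => eN_lt _) (fun i _ => eN_lt _) h
  funext i
  rcases lt_or_ge i (n+2) with hi | hi
  · exact eN_inj (key i hi)
  · rw [hg.2.1 i (by omega), hg'.2.1 i (by omega)]


noncomputable def FC (P : GradedPoset) (n : ℕ) (x z : P.carrier) : ℕ → P.carrier :=
  letI := Classical.dec (x ≤ z)
  if h : x ≤ z then Classical.choose (muW_exists (n := n) h) else fun _ => x

lemma FC_spec {n : ℕ} {x z : P.carrier} (h : x ≤ z) :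
    SatC P x z (FC P n x z) ∧ mW P n (FC P n x z) = muW P n x z := by
  unfold FC
  rw [dif_pos h]
  exact Classical.choose_spec (muW_exists h)

lemma FC_eq {n : ℕ} {x z : P.carrier} (h : x ≤ z) (hz : P.rank z ≤ n+1) {g}
    (hg : SatC P x z g) (hm : mW P n g = muW P n x z) : g = FC P n x z :=
  satc_unique hz hg (FC_spec h).1 (hm.trans (FC_spec h).2.symm)

lemma satc_self_eq {x : P.carrier} {g} (hg : SatC P x x g) (i : ℕ) : g i = x := by
  rcases le_total i (P.rank x) with h | h
  · exact hg.1 i h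
  · exact hg.2.1 i h

/-- A minimal saturated chain restricted to a subinterval of ranks is minimal. -/
lemma submin {n : ℕ} {x z : P.carrier} (hxz : x ≤ z) {g : ℕ → P.carrier}
    (hg : SatC P x z g) (hmin : mW P n g = muW P n x z) {j1 j2 : ℕ}
    (h1 : P.rank x ≤ j1) (h12 : j1 ≤ j2) (h2 : j2 ≤ P.rank z) :
    SatC P (g j1) (g j2) (fun i => g (max j1 (min j2 i))) ∧
      mW P n (fun i => g (max j1 (min j2 i))) = muW P n (g j1) (g j2) := by
  have hr1 : P.rank (g j1) = j1 := satc_rank_eq hg j1 h1 (h12.trans h2)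
  have hr2 : P.rank (g j2) = j2 := satc_rank_eq hg j2 (h1.trans h12) h2
  have hmono := satc_mono hxz hg
  have hxz' : g j1 ≤ g j2 := hmono h12
  have hsat : SatC P (g j1) (g j2) (fun i => g (max j1 (min j2 i))) := by
    refine ⟨?_, ?_, ?_⟩
    · intro i hi
      rw [hr1] at hi
      show g (max j1 (min j2 i)) = g j1
      have hm1 : max j1 (min j2 i) = j1 :=
        max_eq_left ((min_le_right _ _).trans hi)
      rw [hm1]
    · intro i hi
      rw [hr2] at hi
      show g (max j1 (min j2 i)) = g j2
      rw [min_eq_left hi, max_eq_right h12]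
    · intro i hi1 hi2
      rw [hr1] at hi1; rw [hr2] at hi2
      show g (max j1 (min j2 i)) ⋖ g (max j1 (min j2 (i+1)))
      rw [min_eq_right (by omega : i ≤ j2), max_eq_right hi1,
        min_eq_right (by omega : i + 1 ≤ j2), max_eq_right (by omega : j1 ≤ i + 1)]
      exact hg.2.2 i (h1.trans hi1) (lt_of_lt_of_le hi2 h2)
  refine ⟨hsat, ?_⟩
  obtain ⟨h, hh, hhm⟩ := muW_exists (n := n) hxz'
  set s : ℕ → P.carrier := fun i => if i < j1 ∨ j2 < i then g i else h i with hs_def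
  have hsh : ∀ i, j1 ≤ i → i ≤ j2 → s i = h i := by
    intro i ha hb
    simp only [hs_def]
    rw [if_neg (by omega)]
  have hsg : ∀ i, i ≤ j1 ∨ j2 ≤ i → s i = g i := by
    intro i hi
    rcases lt_or_ge i j1 with hc | hc
    · simp only [hs_def]; rw [if_pos (Or.inl hc)]
    · rcases lt_or_ge j2 i with hc2 | hc2
      · simp only [hs_def]; rw [if_pos (Or.inr hc2)]
      · have hif : s i = h i := hsh i hc hc2
        have : i = j1 ∨ i = j2 := by omega
        rcases this with rfl | rfl
        · rw [hif, hh.1 i (by omega)]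
        · rw [hif, hh.2.1 i (by omega)]
  have hrx : P.rank x ≤ P.rank z := by
    rcases eq_or_lt_of_le hxz with rfl | hl
    · exact le_rfl
    · exact (rank_strictMono hl).le
  have hss : SatC P x z s := by
    refine ⟨?_, ?_, ?_⟩
    · intro i hi
      rw [hsg i (Or.inl (hi.trans h1)), hg.1 i hi]
    · intro i hi
      rw [hsg i (Or.inr (h2.trans hi)), hg.2.1 i hi]
    · intro i hi1 hi2
      rcases lt_or_ge i j1 with hc | hc
      · rw [hsg i (Or.inl hc.le), hsg (i+1) (Or.inl (by omega))]
        exact hg.2.2 i hi1 hi2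
      · rcases lt_or_ge i j2 with hc2 | hc2
        · rw [hsh i hc hc2.le, hsh (i+1) (by omega) (by omega)]
          exact hh.2.2 i (by omega) (by omega)
        · rw [hsg i (Or.inr hc2), hsg (i+1) (Or.inr (by omega))]
          exact hg.2.2 i hi1 hi2
  have key : ∀ i, eN P (s i) + eN P (g (max j1 (min j2 i))) = eN P (g i) + eN P (h i) := by
    intro i
    rcases lt_or_ge i j1 with hc | hc
    · rw [hsg i (Or.inl hc.le), hh.1 i (by omega),
        max_eq_left ((min_le_right j2 i).trans hc.le)]
    · rcases le_or_gt i j2 with hc2 | hc2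
      · rw [hsh i hc hc2, min_eq_right hc2, max_eq_right hc, Nat.add_comm]
      · rw [hsg i (Or.inr hc2.le), hh.2.1 i (by omega), min_eq_left hc2.le,
          max_eq_right h12]
  have msum : mW P n s + mW P n (fun i => g (max j1 (min j2 i))) = mW P n g + mW P n h := by
    unfold mW
    rw [← Finset.sum_add_distrib, ← Finset.sum_add_distrib]
    refine Finset.sum_congr rfl fun i _ => ?_
    rw [← add_mul, ← add_mul, key i]
  have hle1 : mW P n g ≤ mW P n s := hmin ▸ muW_le hss
  have hle2 : mW P n h ≤ mW P n (fun i => g (max j1 (min j2 i))) := hhm ▸ muW_le hsat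
  have : mW P n (fun i => g (max j1 (min j2 i))) = mW P n h := by omega
  rw [this, hhm]

instance (P : GradedPoset) : Nonempty P.carrier := ⟨P.bot⟩

/-- The element of `c` of rank `i` (if it exists and is unique). -/
noncomputable def elt (P : GradedPoset) (c : Finset P.carrier) (i : ℕ) : P.carrier :=
  Classical.epsilon fun x => x ∈ c ∧ P.rank x = i

lemma elt_spec {c : Finset P.carrier} {i : ℕ} (h : ∃ x, x ∈ c ∧ P.rank x = i) :
    elt P c i ∈ c ∧ P.rank (elt P c i) = i :=
  Classical.epsilon_spec h

lemma elt_eq {c : Finset P.carrier} (hc : IsChain (· ≤ ·) (↑c : Set P.carrier))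
    {x : P.carrier} {i : ℕ} (hx : x ∈ c) (hr : P.rank x = i) : elt P c i = x := by
  have h := elt_spec (P := P) ⟨x, hx, hr⟩
  exact chain_rank_inj hc h.1 hx (by rw [h.2, hr])

/-- goodness of the interval `[a,b]` for the chain `c` -/
def goodI (P : GradedPoset) (n : ℕ) (c : Finset P.carrier) (a b : ℕ) : Prop :=
  mW P n (fun i => elt P c (max (a-1) (min (b+1) i))) =
    muW P n (elt P c (a-1)) (elt P c (b+1))

/-- the interval system attached to a chain -/
noncomputable def Isys (P : GradedPoset) (n : ℕ) (c : Finset P.carrier) : Finset (Finset ℕ) := by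
  classical
  exact ((Finset.Icc 1 n ×ˢ Finset.Icc 1 n).filter
    fun p => p.1 ≤ p.2 ∧ ¬ goodI P n c p.1 p.2).image fun p => Finset.Icc p.1 p.2

lemma Isys_shape {P : GradedPoset} {n : ℕ} {c : Finset P.carrier} {I : Finset ℕ}
    (hI : I ∈ Isys P n c) : ∃ p q : ℕ, 1 ≤ p ∧ p ≤ q ∧ q ≤ n ∧ I = Finset.Icc p q := by
  classical
  rw [Isys] at hI
  simp only [Finset.mem_image, Finset.mem_filter, Finset.mem_product, Finset.mem_Icc] at hI
  obtain ⟨⟨a, b⟩, ⟨⟨⟨ha1, _⟩, ⟨_, hb2⟩⟩, hab, _⟩, rfl⟩ := hI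
  exact ⟨a, b, ha1, hab, hb2, rfl⟩

lemma Isys_mem {P : GradedPoset} {n : ℕ} {c : Finset P.carrier} {a b : ℕ}
    (ha : 1 ≤ a) (hab : a ≤ b) (hb : b ≤ n) (hng : ¬ goodI P n c a b) :
    Finset.Icc a b ∈ Isys P n c := by
  classical
  rw [Isys]
  simp only [Finset.mem_image, Finset.mem_filter, Finset.mem_product, Finset.mem_Icc]
  exact ⟨(a, b), ⟨⟨⟨ha, hab.trans hb⟩, ⟨ha.trans hab, hb⟩⟩, hab, hng⟩, rfl⟩

section WithS

variable (n : ℕ) (S : Finset ℕ)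

/-- `S` together with the extreme ranks `0` and `n+1`. -/
def Sbar : Finset ℕ := insert 0 (insert (n+1) S)

noncomputable def uF (i : ℕ) : ℕ := sSup {s : ℕ | s ∈ Sbar n S ∧ s ≤ i}

noncomputable def vF (i : ℕ) : ℕ := sInf {s : ℕ | s ∈ Sbar n S ∧ i ≤ s}

lemma uF_mem (i : ℕ) : uF n S i ∈ Sbar n S ∧ uF n S i ≤ i := by
  have hne : {s : ℕ | s ∈ Sbar n S ∧ s ≤ i}.Nonempty :=
    ⟨0, by simp [Sbar], Nat.zero_le i⟩
  have hbdd : BddAbove {s : ℕ | s ∈ Sbar n S ∧ s ≤ i} := ⟨i, fun s hs => hs.2⟩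
  exact Nat.sSup_mem hne hbdd

lemma uF_ge {i s : ℕ} (hs : s ∈ Sbar n S) (hsi : s ≤ i) : s ≤ uF n S i :=
  le_csSup ⟨i, fun t ht => ht.2⟩ ⟨hs, hsi⟩

lemma vF_mem {i : ℕ} (hi : i ≤ n + 1) : vF n S i ∈ Sbar n S ∧ i ≤ vF n S i := by
  have hne : {s : ℕ | s ∈ Sbar n S ∧ i ≤ s}.Nonempty :=
    ⟨n+1, by simp [Sbar], hi⟩
  exact Nat.sInf_mem hne

lemma vF_le {i s : ℕ} (hs : s ∈ Sbar n S) (hsi : i ≤ s) : vF n S i ≤ s :=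
  Nat.sInf_le ⟨hs, hsi⟩

lemma uF_self {i : ℕ} (hi : i ∈ Sbar n S) : uF n S i = i :=
  le_antisymm (uF_mem n S i).2 (uF_ge n S hi le_rfl)

lemma vF_self {i : ℕ} (hi : i ∈ Sbar n S) : vF n S i = i := by
  have h1 := vF_le n S hi le_rfl
  have h2 : i ≤ vF n S i :=
    (Nat.sInf_mem (⟨i, hi, le_rfl⟩ : {s : ℕ | s ∈ Sbar n S ∧ i ≤ s}.Nonempty)).2
  omega

lemma uF_succ {i : ℕ} (hi : i + 1 ∉ Sbar n S) : uF n S (i+1) = uF n S i := by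
  unfold uF
  congr 1
  ext s
  simp only [Set.mem_setOf_eq, and_congr_right_iff]
  intro hs
  constructor
  · intro h
    rcases Nat.lt_or_ge s (i+1) with h' | h'
    · omega
    · exact absurd (le_antisymm h h' ▸ hs) hi
  · omega

lemma vF_notmem {i : ℕ} (hi : i ∉ Sbar n S) : vF n S i = vF n S (i+1) := by
  unfold vF
  congr 1
  ext s
  simp only [Set.mem_setOf_eq, and_congr_right_iff]
  intro hs
  constructor
  · intro h
    rcases Nat.lt_or_ge i s with h' | h'
    · omega
    · exact absurd (le_antisymm h' h ▸ hs) hi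
  · omega

end WithS

lemma Sbar_le_bound {n : ℕ} {S : Finset ℕ} (hS : S ⊆ Finset.Icc 1 n) :
    ∀ s ∈ Sbar n S, s ≤ n + 1 := by
  intro s hs
  rw [Sbar, Finset.mem_insert, Finset.mem_insert] at hs
  rcases hs with rfl | rfl | hs
  · omega
  · omega
  · have := hS hs
    rw [Finset.mem_Icc] at this
    omega

/-- the chain `c'` together with `bot` and `top` -/
noncomputable def dch (P : GradedPoset) (c' : Finset P.carrier) : Finset P.carrier := by
  classical
  exact insert P.bot (insert P.top c')

noncomputable def phiF (P : GradedPoset) (n : ℕ) (S : Finset ℕ) (c' : Finset P.carrier)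
    (i : ℕ) : P.carrier :=
  FC P n (elt P (dch P c') (uF n S i)) (elt P (dch P c') (vF n S i)) i

noncomputable def PhiF (P : GradedPoset) (n : ℕ) (S : Finset ℕ) (c' : Finset P.carrier) :
    Finset P.carrier := by
  classical
  exact (Finset.Icc 0 (n+1)).image (phiF P n S c')

section PhiLemmas

variable {P : GradedPoset} {n : ℕ} {S : Finset ℕ} {c' : Finset P.carrier}

lemma d_chain (hc' : IsChain (· ≤ ·) (↑c' : Set P.carrier)) :
    IsChain (· ≤ ·) (↑(dch P c') : Set P.carrier) := by
  classical
  unfold dch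
  rw [Finset.coe_insert, Finset.coe_insert]
  refine IsChain.insert (IsChain.insert hc' ?_) ?_
  · intro b _ _
    exact Or.inr (P.le_top b)
  · intro b _ _
    exact Or.inl (P.bot_le b)

lemma d_img (hP : P.rank P.top = n + 1) (himg : c'.image P.rank = S) :
    (dch P c').image P.rank = Sbar n S := by
  classical
  unfold dch Sbar
  rw [Finset.image_insert, Finset.image_insert, P.rank_bot, hP, himg]

lemma w_spec (hP : P.rank P.top = n + 1) (himg : c'.image P.rank = S)
    {s : ℕ} (hs : s ∈ Sbar n S) :
    elt P (dch P c') s ∈ dch P c' ∧ P.rank (elt P (dch P c') s) = s := by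
  apply elt_spec
  have h : s ∈ (dch P c').image P.rank := by rw [d_img hP himg]; exact hs
  rw [Finset.mem_image] at h
  obtain ⟨x, hx, hxr⟩ := h
  exact ⟨x, hx, hxr⟩

lemma w_mono (hP : P.rank P.top = n + 1) (hc' : IsChain (· ≤ ·) (↑c' : Set P.carrier))
    (himg : c'.image P.rank = S) {s t : ℕ} (hs : s ∈ Sbar n S) (ht : t ∈ Sbar n S)
    (hst : s ≤ t) : elt P (dch P c') s ≤ elt P (dch P c') t := by
  rcases eq_or_lt_of_le hst with rfl | h
  · exact le_rfl
  · have h1 := w_spec hP himg hs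
    have h2 := w_spec hP himg ht
    have hne : elt P (dch P c') s ≠ elt P (dch P c') t := by
      intro he
      rw [he] at h1
      omega
    rcases d_chain hc' (Finset.mem_coe.mpr h1.1) (Finset.mem_coe.mpr h2.1) hne with hle | hle
    · exact hle
    · have := rank_le_of_le hle
      omega

lemma phi_mem_Sbar (hP : P.rank P.top = n + 1) (himg : c'.image P.rank = S)
    {i : ℕ} (hi : i ∈ Sbar n S) : phiF P n S c' i = elt P (dch P c') i := by
  unfold phiF
  rw [uF_self n S hi, vF_self n S hi]
  exact satc_self_eq (FC_spec le_rfl).1 i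

lemma phi_seg (hP : P.rank P.top = n + 1) (hS : S ⊆ Finset.Icc 1 n)
    (hc' : IsChain (· ≤ ·) (↑c' : Set P.carrier)) (himg : c'.image P.rank = S)
    {p q : ℕ} (hp : p ∈ Sbar n S) (hq : q ∈ Sbar n S) (hpq : p ≤ q)
    (gap : ∀ s ∈ Sbar n S, s ≤ p ∨ q ≤ s) :
    ∀ i, p ≤ i → i ≤ q → phiF P n S c' i =
      FC P n (elt P (dch P c') p) (elt P (dch P c') q) i := by
  intro i h1 h2
  have hwpq := w_mono hP hc' himg hp hq hpq
  have hrp := (w_spec hP himg hp).2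
  have hrq := (w_spec hP himg hq).2
  by_cases hi : i ∈ Sbar n S
  · rcases gap i hi with hip | hiq
    · have : i = p := le_antisymm hip h1
      subst this
      rw [phi_mem_Sbar hP himg hi]
      rw [(FC_spec hwpq).1.1 i (by omega)]
    · have : i = q := le_antisymm h2 hiq
      subst this
      rw [phi_mem_Sbar hP himg hi]
      rw [(FC_spec hwpq).1.2.1 i (by omega)]
  · have hup : uF n S i = p := by
      have hu := uF_mem n S i
      rcases gap _ hu.1 with h' | h'
      · exact le_antisymm h' (uF_ge n S hp h1)
      · exfalso
        have : i ≠ q := fun he => hi (he ▸ hq)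
        omega
    have hvq : vF n S i = q := by
      have hv := vF_mem n S (le_trans h2 (Sbar_le_bound hS q hq))
      rcases gap _ hv.1 with h' | h'
      · exfalso
        have : i ≠ p := fun he => hi (he ▸ hp)
        omega
      · exact le_antisymm (vF_le n S hq h2) h'
    unfold phiF
    rw [hup, hvq]

lemma phi_rank (hP : P.rank P.top = n + 1) (hS : S ⊆ Finset.Icc 1 n)
    (hc' : IsChain (· ≤ ·) (↑c' : Set P.carrier)) (himg : c'.image P.rank = S)
    {i : ℕ} (hi : i ≤ n + 1) : P.rank (phiF P n S c' i) = i := by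
  have hu := uF_mem n S i
  have hv := vF_mem n S hi
  have hwpq := w_mono hP hc' himg hu.1 hv.1 (hu.2.trans hv.2)
  have hrp := (w_spec hP himg hu.1).2
  have hrq := (w_spec hP himg hv.1).2
  unfold phiF
  exact satc_rank_eq (FC_spec hwpq).1 i (by omega) (by omega)

lemma phi_cover (hP : P.rank P.top = n + 1) (hS : S ⊆ Finset.Icc 1 n)
    (hc' : IsChain (· ≤ ·) (↑c' : Set P.carrier)) (himg : c'.image P.rank = S)
    {i : ℕ} (hi : i ≤ n) : phiF P n S c' i ⋖ phiF P n S c' (i+1) := by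
  have hu := uF_mem n S i
  have hv := vF_mem n S (by omega : i + 1 ≤ n + 1)
  have hpq : uF n S i ≤ vF n S (i+1) := by omega
  have hwpq := w_mono hP hc' himg hu.1 hv.1 hpq
  have hrp := (w_spec hP himg hu.1).2
  have hrq := (w_spec hP himg hv.1).2
  have e1 : phiF P n S c' i =
      FC P n (elt P (dch P c') (uF n S i)) (elt P (dch P c') (vF n S (i+1))) i := by
    by_cases hmem : i ∈ Sbar n S
    · rw [phi_mem_Sbar hP himg hmem]
      have hpi : uF n S i = i := uF_self n S hmem
      rw [(FC_spec hwpq).1.1 i (by omega), hpi]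
    · unfold phiF
      rw [vF_notmem n S hmem]
  have e2 : phiF P n S c' (i+1) =
      FC P n (elt P (dch P c') (uF n S i)) (elt P (dch P c') (vF n S (i+1))) (i+1) := by
    by_cases hmem : i + 1 ∈ Sbar n S
    · rw [phi_mem_Sbar hP himg hmem]
      have hqi : vF n S (i+1) = i + 1 := vF_self n S hmem
      rw [(FC_spec hwpq).1.2.1 (i+1) (by omega), hqi]
    · unfold phiF
      rw [uF_succ n S hmem]
  rw [e1, e2]
  exact (FC_spec hwpq).1.2.2 i (by omega) (by omega)

lemma phi_mono (hP : P.rank P.top = n + 1) (hS : S ⊆ Finset.Icc 1 n)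
    (hc' : IsChain (· ≤ ·) (↑c' : Set P.carrier)) (himg : c'.image P.rank = S) :
    ∀ k i, i + k ≤ n + 1 → phiF P n S c' i ≤ phiF P n S c' (i + k) := by
  intro k
  induction k with
  | zero => intro i _; exact le_rfl
  | succ k IH =>
    intro i hik
    calc phiF P n S c' i ≤ phiF P n S c' (i + k) := IH i (by omega)
      _ ≤ phiF P n S c' (i + k + 1) :=
        (phi_cover hP hS hc' himg (by omega : i + k ≤ n)).le

lemma Phi_chain (hP : P.rank P.top = n + 1) (hS : S ⊆ Finset.Icc 1 n)
    (hc' : IsChain (· ≤ ·) (↑c' : Set P.carrier)) (himg : c'.image P.rank = S) :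
    IsChain (· ≤ ·) (↑(PhiF P n S c') : Set P.carrier) := by
  classical
  intro x hx y hy _
  rw [Finset.mem_coe, PhiF, Finset.mem_image] at hx hy
  obtain ⟨i, hi, rfl⟩ := hx
  obtain ⟨j, hj, rfl⟩ := hy
  rw [Finset.mem_Icc] at hi hj
  rcases le_total i j with h | h
  · left
    have := phi_mono hP hS hc' himg (j - i) i (by omega)
    rwa [show i + (j - i) = j by omega] at this
  · right
    have := phi_mono hP hS hc' himg (i - j) j (by omega)
    rwa [show j + (i - j) = i by omega] at this

lemma Phi_img (hP : P.rank P.top = n + 1) (hS : S ⊆ Finset.Icc 1 n)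
    (hc' : IsChain (· ≤ ·) (↑c' : Set P.carrier)) (himg : c'.image P.rank = S) :
    (PhiF P n S c').image P.rank = Finset.Icc 0 (n+1) := by
  classical
  ext j
  simp only [PhiF, Finset.mem_image, Finset.mem_Icc]
  constructor
  · rintro ⟨x, ⟨i, hi, rfl⟩, rfl⟩
    rw [phi_rank hP hS hc' himg hi.2]
    omega
  · intro hj
    exact ⟨phiF P n S c' j, ⟨j, ⟨hj.1, hj.2⟩, rfl⟩,
      phi_rank hP hS hc' himg hj.2⟩

lemma Phi_elt (hP : P.rank P.top = n + 1) (hS : S ⊆ Finset.Icc 1 n)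
    (hc' : IsChain (· ≤ ·) (↑c' : Set P.carrier)) (himg : c'.image P.rank = S)
    {i : ℕ} (hi : i ≤ n + 1) : elt P (PhiF P n S c') i = phiF P n S c' i := by
  classical
  apply elt_eq (Phi_chain hP hS hc' himg)
  · rw [PhiF, Finset.mem_image]
    exact ⟨i, Finset.mem_Icc.mpr ⟨Nat.zero_le i, hi⟩, rfl⟩
  · exact phi_rank hP hS hc' himg hi

end PhiLemmas

lemma Isys_shape' {P : GradedPoset} {n : ℕ} {c : Finset P.carrier} {I : Finset ℕ}
    (hI : I ∈ Isys P n c) :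
    ∃ p q : ℕ, 1 ≤ p ∧ p ≤ q ∧ q ≤ n ∧ I = Finset.Icc p q ∧ ¬ goodI P n c p q := by
  classical
  rw [Isys] at hI
  simp only [Finset.mem_image, Finset.mem_filter, Finset.mem_product, Finset.mem_Icc] at hI
  obtain ⟨⟨a, b⟩, ⟨⟨⟨ha1, _⟩, ⟨_, hb2⟩⟩, hab, hng⟩, rfl⟩ := hI
  exact ⟨a, b, ha1, hab, hb2, rfl, hng⟩

section MainLemmas

variable {P : GradedPoset} {n : ℕ} {S : Finset ℕ} {c' : Finset P.carrier}

lemma melt {c : Finset P.carrier} (himgc : c.image P.rank = Finset.Icc 0 (n+1))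
    {i : ℕ} (hi : i ≤ n + 1) : elt P c i ∈ c ∧ P.rank (elt P c i) = i := by
  apply elt_spec
  have h : i ∈ c.image P.rank := by
    rw [himgc]; exact Finset.mem_Icc.mpr ⟨Nat.zero_le _, hi⟩
  rw [Finset.mem_image] at h
  obtain ⟨x, hx, hxr⟩ := h
  exact ⟨x, hx, hxr⟩

lemma melt_lt {c : Finset P.carrier} (hc : IsChain (· ≤ ·) (↑c : Set P.carrier))
    (himgc : c.image P.rank = Finset.Icc 0 (n+1)) {j k : ℕ} (hjk : j < k) (hk : k ≤ n + 1) :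
    elt P c j < elt P c k := by
  have h1 := melt himgc (le_trans (le_of_lt hjk) hk)
  have h2 := melt himgc hk
  have hne : elt P c j ≠ elt P c k := by
    intro he; rw [he] at h1; omega
  rcases hc (Finset.mem_coe.mpr h1.1) (Finset.mem_coe.mpr h2.1) hne with hle | hle
  · exact lt_of_le_of_ne hle hne
  · exfalso
    have := rank_le_of_le hle
    omega

lemma Phi_good (hP : P.rank P.top = n + 1) (hS : S ⊆ Finset.Icc 1 n)
    (hc' : IsChain (· ≤ ·) (↑c' : Set P.carrier)) (himg : c'.image P.rank = S)
    {a b : ℕ} (ha : 1 ≤ a) (hab : a ≤ b) (hb : b ≤ n)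
    (hdis : S ∩ Finset.Icc a b = ∅) : goodI P n (PhiF P n S c') a b := by
  classical
  obtain ⟨hpS, hpi⟩ := uF_mem n S (a-1)
  obtain ⟨hqS, hqi⟩ := vF_mem n S (by omega : b + 1 ≤ n + 1)
  have hqn := Sbar_le_bound hS _ hqS
  have gap : ∀ s ∈ Sbar n S, s ≤ uF n S (a-1) ∨ vF n S (b+1) ≤ s := by
    intro s hs
    rcases le_or_gt s (a-1) with h' | h'
    · exact Or.inl (uF_ge n S hs h')
    · rcases le_or_gt (b+1) s with h'' | h''
      · exact Or.inr (vF_le n S hs h'')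
      · exfalso
        rw [Sbar, Finset.mem_insert, Finset.mem_insert] at hs
        rcases hs with rfl | rfl | hs
        · omega
        · omega
        · have : s ∈ S ∩ Finset.Icc a b :=
            Finset.mem_inter.mpr ⟨hs, Finset.mem_Icc.mpr ⟨by omega, by omega⟩⟩
          rw [hdis] at this
          exact absurd this (Finset.notMem_empty s)
  have hpq : uF n S (a-1) ≤ vF n S (b+1) := by omega
  have hseg := phi_seg hP hS hc' himg hpS hqS hpq gap
  have hwpq := w_mono hP hc' himg hpS hqS hpq
  have hrp := (w_spec hP himg hpS).2
  have hrq := (w_spec hP himg hqS).2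
  obtain ⟨hgsat, hgm⟩ := FC_spec (n := n) hwpq
  have hsub := submin hwpq hgsat hgm (j1 := a-1) (j2 := b+1)
    (by omega) (by omega) (by omega)
  have heltphi : ∀ j, uF n S (a-1) ≤ j → j ≤ vF n S (b+1) →
      elt P (PhiF P n S c') j
        = FC P n (elt P (dch P c') (uF n S (a-1))) (elt P (dch P c') (vF n S (b+1))) j := by
    intro j h1 h2
    rw [Phi_elt hP hS hc' himg (by omega), hseg j h1 h2]
  show mW P n (fun i => elt P (PhiF P n S c') (max (a-1) (min (b+1) i))) =
    muW P n (elt P (PhiF P n S c') (a-1)) (elt P (PhiF P n S c') (b+1))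
  have hfun : (fun i => elt P (PhiF P n S c') (max (a-1) (min (b+1) i))) =
      fun i => FC P n (elt P (dch P c') (uF n S (a-1)))
        (elt P (dch P c') (vF n S (b+1))) (max (a-1) (min (b+1) i)) := by
    funext i
    exact heltphi _ (by omega) (by omega)
  rw [hfun, heltphi (a-1) (by omega) (by omega), heltphi (b+1) (by omega) (by omega)]
  exact hsub.2

lemma recover (hP : P.rank P.top = n + 1) (hS : S ⊆ Finset.Icc 1 n)
    {c : Finset P.carrier} (hc : IsChain (· ≤ ·) (↑c : Set P.carrier))
    (himgc : c.image P.rank = Finset.Icc 0 (n+1))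
    (hblock : ∀ a b, 1 ≤ a → a ≤ b → b ≤ n → S ∩ Finset.Icc a b = ∅ → goodI P n c a b) :
    ∃ c'' : Finset P.carrier, IsChain (· ≤ ·) (↑c'' : Set P.carrier) ∧
      c''.image P.rank = S ∧ PhiF P n S c'' = c := by
  classical
  set c'' := c.filter (fun x => P.rank x ∈ S) with hc''_def
  have hsub : c'' ⊆ c := Finset.filter_subset _ _
  have hc''chain : IsChain (· ≤ ·) (↑c'' : Set P.carrier) :=
    hc.mono (Finset.coe_subset.mpr hsub)
  have himg'' : c''.image P.rank = S := by
    ext s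
    simp only [hc''_def, Finset.mem_image, Finset.mem_filter]
    constructor
    · rintro ⟨x, ⟨_, hxS⟩, rfl⟩
      exact hxS
    · intro hs
      have hs' : s ≤ n + 1 := by
        have := hS hs
        rw [Finset.mem_Icc] at this
        omega
      obtain ⟨hmem, hrank⟩ := melt himgc hs'
      exact ⟨elt P c s, ⟨hmem, by rw [hrank]; exact hs⟩, hrank⟩
  have hbot : P.bot ∈ c := by
    obtain ⟨hmem, hrank⟩ := melt himgc (Nat.zero_le (n+1))
    have := eq_bot_of_rank _ hrank
    rwa [this] at hmem
  have htop : P.top ∈ c := by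
    obtain ⟨hmem, hrank⟩ := melt himgc (le_refl (n+1))
    have := eq_top_of_rank hP _ hrank
    rwa [this] at hmem
  have hdsub : dch P c'' ⊆ c := by
    unfold dch
    intro x hx
    simp only [Finset.mem_insert] at hx
    rcases hx with rfl | rfl | hx
    · exact hbot
    · exact htop
    · exact hsub hx
  have hwelt : ∀ s ∈ Sbar n S, elt P (dch P c'') s = elt P c s := by
    intro s hs
    have h1 := w_spec hP himg'' hs
    exact (elt_eq hc (hdsub h1.1) h1.2).symm
  have hkey : ∀ i, i ≤ n + 1 → phiF P n S c'' i = elt P c i := by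
    intro i hi
    obtain ⟨hpS, hpi⟩ := uF_mem n S i
    obtain ⟨hqS, hqi⟩ := vF_mem n S hi
    have hpn := Sbar_le_bound hS _ hpS
    have hqn := Sbar_le_bound hS _ hqS
    rcases eq_or_lt_of_le (le_trans hpi hqi) with heq | hlt
    · -- i ∈ Sbar
      have hiS : i ∈ Sbar n S := by
        have : uF n S i = i := by omega
        rwa [← this]
      rw [phi_mem_Sbar hP himg'' hiS, hwelt i hiS]
    · have hiS : i ∉ Sbar n S := by
        intro hiS
        have h1 := uF_self n S hiS
        have h2 := vF_self n S hiS
        omega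
      have hpi' : uF n S i < i := by
        rcases eq_or_lt_of_le hpi with h' | h'
        · exact absurd (h' ▸ hpS) hiS
        · exact h'
      have hqi' : i < vF n S i := by
        rcases eq_or_lt_of_le hqi with h' | h'
        · exact absurd (h' ▸ hqS) hiS
        · exact h'
      have gapc : ∀ s ∈ Sbar n S, s ≤ uF n S i ∨ vF n S i ≤ s := by
        intro s hs
        rcases le_or_gt s i with h' | h'
        · exact Or.inl (uF_ge n S hs h')
        · exact Or.inr (vF_le n S hs h'.le)
      have hdis : S ∩ Finset.Icc (uF n S i + 1) (vF n S i - 1) = ∅ := by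
        rw [Finset.eq_empty_iff_forall_notMem]
        intro s hs
        rw [Finset.mem_inter, Finset.mem_Icc] at hs
        have hsSbar : s ∈ Sbar n S := by
          rw [Sbar, Finset.mem_insert, Finset.mem_insert]
          exact Or.inr (Or.inr hs.1)
        rcases gapc s hsSbar with h' | h' <;> omega
      have hgood := hblock (uF n S i + 1) (vF n S i - 1) (by omega) (by omega)
        (by omega) hdis
      unfold goodI at hgood
      have e1 : uF n S i + 1 - 1 = uF n S i := by omega
      have e2 : vF n S i - 1 + 1 = vF n S i := by omega
      rw [e1, e2] at hgood
      -- the clamped segment of c is a saturated chain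
      have hsat : SatC P (elt P c (uF n S i)) (elt P c (vF n S i))
          (fun j => elt P c (max (uF n S i) (min (vF n S i) j))) := by
        refine ⟨?_, ?_, ?_⟩
        · intro j hj
          rw [(melt himgc hpn).2] at hj
          show elt P c (max (uF n S i) (min (vF n S i) j)) = elt P c (uF n S i)
          have : max (uF n S i) (min (vF n S i) j) = uF n S i :=
            max_eq_left ((min_le_right _ _).trans hj)
          rw [this]
        · intro j hj
          rw [(melt himgc hqn).2] at hj
          show elt P c (max (uF n S i) (min (vF n S i) j)) = elt P c (vF n S i)
          rw [min_eq_left hj, max_eq_right (by omega)]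
        · intro j hj1 hj2
          rw [(melt himgc hpn).2] at hj1
          rw [(melt himgc hqn).2] at hj2
          show elt P c (max (uF n S i) (min (vF n S i) j)) ⋖
            elt P c (max (uF n S i) (min (vF n S i) (j+1)))
          rw [min_eq_right (by omega : j ≤ vF n S i), max_eq_right hj1,
            min_eq_right (by omega : j + 1 ≤ vF n S i), max_eq_right (by omega)]
          refine covBy_of_rank (melt_lt hc himgc (by omega) (by omega)) ?_
          rw [(melt himgc (by omega : j + 1 ≤ n + 1)).2,
            (melt himgc (by omega : j ≤ n + 1)).2]
      have hxzle : elt P c (uF n S i) ≤ elt P c (vF n S i) :=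
        (melt_lt hc himgc hlt hqn).le
      have hFC := FC_eq hxzle (by rw [(melt himgc hqn).2]; exact hqn) hsat hgood
      unfold phiF
      rw [hwelt _ hpS, hwelt _ hqS, ← hFC]
      show elt P c (max (uF n S i) (min (vF n S i) i)) = elt P c i
      rw [min_eq_right hqi'.le, max_eq_right hpi]
  refine ⟨c'', hc''chain, himg'', ?_⟩
  ext y
  rw [PhiF, Finset.mem_image]
  constructor
  · rintro ⟨i, hi, rfl⟩
    rw [Finset.mem_Icc] at hi
    rw [hkey i hi.2]
    exact (melt himgc hi.2).1
  · intro hy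
    have hyr : P.rank y ∈ Finset.Icc 0 (n+1) := by
      rw [← himgc]
      exact Finset.mem_image_of_mem _ hy
    rw [Finset.mem_Icc] at hyr
    refine ⟨P.rank y, Finset.mem_Icc.mpr hyr, ?_⟩
    rw [hkey _ hyr.2, elt_eq hc hy rfl]

lemma Phi_filter (hP : P.rank P.top = n + 1) (hS : S ⊆ Finset.Icc 1 n)
    (hc' : IsChain (· ≤ ·) (↑c' : Set P.carrier)) (himg : c'.image P.rank = S) :
    (PhiF P n S c').filter (fun x => P.rank x ∈ S) = c' := by
  classical
  ext x
  simp only [Finset.mem_filter]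
  constructor
  · rintro ⟨hx, hxS⟩
    rw [PhiF, Finset.mem_image] at hx
    obtain ⟨i, hi, rfl⟩ := hx
    rw [Finset.mem_Icc] at hi
    rw [phi_rank hP hS hc' himg hi.2] at hxS
    have hiS : i ∈ Sbar n S := by
      rw [Sbar, Finset.mem_insert, Finset.mem_insert]
      exact Or.inr (Or.inr hxS)
    rw [phi_mem_Sbar hP himg hiS]
    have hd := (w_spec hP himg hiS).1
    have hdr := (w_spec hP himg hiS).2
    unfold dch at hd hdr ⊢
    simp only [Finset.mem_insert] at hd
    rcases hd with he | he | he
    · exfalso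
      rw [he, P.rank_bot] at hdr
      have := hS (hdr ▸ hxS)
      rw [Finset.mem_Icc] at this
      omega
    · exfalso
      rw [he, hP] at hdr
      have := hS (hdr ▸ hxS)
      rw [Finset.mem_Icc] at this
      omega
    · exact he
  · intro hx
    have hxS : P.rank x ∈ S := by
      rw [← himg]
      exact Finset.mem_image_of_mem _ hx
    have hxn : P.rank x ≤ n + 1 := by
      have := hS hxS
      rw [Finset.mem_Icc] at this
      omega
    have hiS : P.rank x ∈ Sbar n S := by
      rw [Sbar, Finset.mem_insert, Finset.mem_insert]
      exact Or.inr (Or.inr hxS)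
    have hxd : x ∈ dch P c' := by
      unfold dch
      simp only [Finset.mem_insert]
      exact Or.inr (Or.inr hx)
    refine ⟨?_, hxS⟩
    rw [PhiF, Finset.mem_image]
    refine ⟨P.rank x, Finset.mem_Icc.mpr ⟨Nat.zero_le _, hxn⟩, ?_⟩
    rw [phi_mem_Sbar hP himg hiS]
    exact elt_eq (d_chain hc') hxd rfl

end MainLemmas

end Stmt2Aux


/-- The flag number `f_S(P)`: the number of chains in `P` whose set of ranks is `S`. -/
noncomputable def flagNum (P : GradedPoset) (S : Finset ℕ) : ℕ :=
  Set.ncard {c : Finset P.carrier |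
    IsChain (· ≤ ·) (↑c : Set P.carrier) ∧ c.image P.rank = S}

theorem stmt_2 (n : ℕ) (hn : 1 ≤ n) (P : GradedPoset) (hP : P.rank P.top = n + 1) :
    ∃ ℐ : Finset P.carrier → Finset (Finset ℕ),
      (∀ c : Finset P.carrier,
          (IsChain (· ≤ ·) (↑c : Set P.carrier) ∧ c.image P.rank = Finset.Icc 0 (n + 1)) →
          ∀ I ∈ ℐ c, ∃ p q : ℕ, 1 ≤ p ∧ p ≤ q ∧ q ≤ n ∧ I = Finset.Icc p q) ∧
      ∀ S ⊆ Finset.Icc 1 n,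
        Set.ncard {c : Finset P.carrier |
            (IsChain (· ≤ ·) (↑c : Set P.carrier) ∧ c.image P.rank = Finset.Icc 0 (n + 1)) ∧
            ∀ I ∈ ℐ c, (S ∩ I).Nonempty} = flagNum P S := by
  classical
  refine ⟨Stmt2Aux.Isys P n, ?_, ?_⟩
  · intro c _ I hI
    exact Stmt2Aux.Isys_shape hI
  · intro S hS
    have key : {c : Finset P.carrier |
        (IsChain (· ≤ ·) (↑c : Set P.carrier) ∧ c.image P.rank = Finset.Icc 0 (n + 1)) ∧
        ∀ I ∈ Stmt2Aux.Isys P n c, (S ∩ I).Nonempty} =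
        Stmt2Aux.PhiF P n S '' {c' : Finset P.carrier |
          IsChain (· ≤ ·) (↑c' : Set P.carrier) ∧ c'.image P.rank = S} := by
      ext c
      simp only [Set.mem_setOf_eq, Set.mem_image]
      constructor
      · rintro ⟨⟨hc, himgc⟩, hbl⟩
        have hblock : ∀ a b, 1 ≤ a → a ≤ b → b ≤ n →
            S ∩ Finset.Icc a b = ∅ → Stmt2Aux.goodI P n c a b := by
          intro a b ha hab hb hdis
          by_contra hng
          have h := hbl _ (Stmt2Aux.Isys_mem ha hab hb hng)
          rw [hdis] at h
          exact absurd h (by simp)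
        obtain ⟨c'', h1, h2, h3⟩ := Stmt2Aux.recover hP hS hc himgc hblock
        exact ⟨c'', ⟨h1, h2⟩, h3⟩
      · rintro ⟨c', ⟨hc', himg⟩, rfl⟩
        refine ⟨⟨Stmt2Aux.Phi_chain hP hS hc' himg, Stmt2Aux.Phi_img hP hS hc' himg⟩, ?_⟩
        intro I hI
        obtain ⟨a, b, ha, hab, hb, rfl, hng⟩ := Stmt2Aux.Isys_shape' hI
        by_contra hne
        rw [Finset.not_nonempty_iff_eq_empty] at hne
        exact hng (Stmt2Aux.Phi_good hP hS hc' himg ha hab hb hne)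
    rw [key, Set.ncard_image_of_injOn]
    · rfl
    · intro c1 h1 c2 h2 heq
      rw [← Stmt2Aux.Phi_filter hP hS h1.1 h1.2, ← Stmt2Aux.Phi_filter hP hS h2.1 h2.2, heq]
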